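/- Let d ≥ 1 and let f = (x^2+y^3)^2 + ∑_{3i+2j ≥ 12+d} w_{ij} x^i y^j ∈ ℂ[[x,y]], where the sum ranges over pairs (i,j) of nonnegative integers with 3i+2j ≥ 12+d. If ∑_{3i+2j = 12+d} (−1)^{⌊i/2⌋} w_{ij} ≠ 0 and μ(f) < ∞, then μ(f) ≥ 15 + d, where μ(f) = dim_ℂ ℂ[[x,y]]/⟨∂f/∂x, ∂f/∂y⟩. -/

import Mathlib

set_option synthInstance.maxHeartbeats 1000000
set_option maxHeartbeats 1000000

open MvPowerSeries

/-- The formal partial derivative `∂g/∂x_i` of a power series in two variables,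
defined coefficientwise. -/
noncomputable def pd (i : Fin 2) (g : MvPowerSeries (Fin 2) ℂ) :
    MvPowerSeries (Fin 2) ℂ :=
  fun m => ((m i : ℂ) + 1) * MvPowerSeries.coeff (m + Finsupp.single i 1) g

noncomputable section WSsec

abbrev WSR : Type := MvPowerSeries (Fin 2) ℂ

/-- weighted degree: x has weight 3, y weight 2 -/
def wtt (m : Fin 2 →₀ ℕ) : ℕ := 3 * m 0 + 2 * m 1

/-- the exponent finsupp (a, b) -/
def pmm (a b : ℕ) : Fin 2 →₀ ℕ := Finsupp.single 0 a + Finsupp.single 1 b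

lemma pmm_apply0 (a b : ℕ) : pmm a b 0 = a := by
  simp [pmm, Finsupp.single_apply]

lemma pmm_apply1 (a b : ℕ) : pmm a b 1 = b := by
  simp [pmm, Finsupp.single_apply]

lemma fin2_eta (m : Fin 2 →₀ ℕ) : pmm (m 0) (m 1) = m := by
  ext i
  fin_cases i <;> simp [pmm, Finsupp.single_apply]

lemma pmm_inj {a b c d : ℕ} (h : pmm a b = pmm c d) : a = c ∧ b = d := by
  constructor
  · have := congrArg (fun f => f 0) h; simpa [pmm_apply0] using this
  · have := congrArg (fun f => f 1) h; simpa [pmm_apply1] using this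

lemma pmm_add (a b c d : ℕ) : pmm a b + pmm c d = pmm (a+c) (b+d) := by
  ext i
  fin_cases i <;> simp [pmm, Finsupp.single_apply]

lemma wtt_pmm (a b : ℕ) : wtt (pmm a b) = 3*a + 2*b := by
  simp [wtt, pmm_apply0, pmm_apply1]

lemma wtt_add (m n : Fin 2 →₀ ℕ) : wtt (m + n) = wtt m + wtt n := by
  simp [wtt, Finsupp.add_apply]; ring

lemma wtt_eq_zero {m : Fin 2 →₀ ℕ} (h : wtt m = 0) : m = 0 := by
  have h0 : m 0 = 0 := by simp [wtt] at h; omega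
  have h1 : m 1 = 0 := by simp [wtt] at h; omega
  rw [← fin2_eta m, h0, h1]
  simp [pmm]

lemma wtt_ne_one (m : Fin 2 →₀ ℕ) : wtt m ≠ 1 := by
  simp only [wtt]; omega

end WSsec

noncomputable section WSsec2
open Finset

/-- weighted-homogeneous component of weighted degree `k` (raw function) -/
def GrF (k : ℕ) (g : WSR) : WSR :=
  fun m => if wtt m = k then MvPowerSeries.coeff m g else 0

lemma coeff_GrF (k : ℕ) (g : WSR) (m : Fin 2 →₀ ℕ) :
    MvPowerSeries.coeff m (GrF k g) = if wtt m = k then MvPowerSeries.coeff m g else 0 := rfl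

/-- weighted-homogeneous component of weighted degree `k` -/
def Gr (k : ℕ) : WSR →ₗ[ℂ] WSR where
  toFun := GrF k
  map_add' g h := by
    apply MvPowerSeries.ext; intro m
    rw [map_add, coeff_GrF, coeff_GrF, coeff_GrF, map_add]
    split <;> simp
  map_smul' c g := by
    apply MvPowerSeries.ext; intro m
    rw [RingHom.id_apply, MvPowerSeries.coeff_smul, coeff_GrF, coeff_GrF,
      MvPowerSeries.coeff_smul]
    split <;> simp

lemma coeff_Gr (k : ℕ) (g : WSR) (m : Fin 2 →₀ ℕ) :
    MvPowerSeries.coeff m (Gr k g) = if wtt m = k then MvPowerSeries.coeff m g else 0 := rfl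

/-- index set of exponents of weighted degree `n` -/
def lineF (n : ℕ) : Finset (ℕ × ℕ) :=
  (Finset.range (n+1) ×ˢ Finset.range (n+1)).filter (fun p => 3*p.1 + 2*p.2 = n)

lemma mem_lineF {n : ℕ} {p : ℕ × ℕ} : p ∈ lineF n ↔ 3*p.1 + 2*p.2 = n := by
  constructor
  · intro h; exact (Finset.mem_filter.mp h).2
  · intro h
    refine Finset.mem_filter.mpr ⟨Finset.mem_product.mpr ⟨?_, ?_⟩, h⟩ <;>
      · rw [Finset.mem_range]; omega

/-- the "cusp evaluation" functional: the coefficient of `t^n` in `g (t³, -t²)` -/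
def ph (n : ℕ) : WSR →ₗ[ℂ] ℂ where
  toFun g := ∑ p ∈ lineF n, (-1:ℂ)^p.2 * MvPowerSeries.coeff (pmm p.1 p.2) g
  map_add' g h := by simp [mul_add, Finset.sum_add_distrib]
  map_smul' c g := by
    simp only [map_smul, smul_eq_mul, RingHom.id_apply, Finset.mul_sum]
    exact Finset.sum_congr rfl (by intros; ring)

lemma ph_apply (n : ℕ) (g : WSR) :
    ph n g = ∑ p ∈ lineF n, (-1:ℂ)^p.2 * MvPowerSeries.coeff (pmm p.1 p.2) g := rfl

lemma ph_eq_zero_of (n : ℕ) (g : WSR) (h : ∀ m, wtt m = n → MvPowerSeries.coeff m g = 0) :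
    ph n g = 0 := by
  rw [ph_apply]
  refine Finset.sum_eq_zero fun p hp => ?_
  rw [h _ (by rw [wtt_pmm]; exact mem_lineF.mp hp), mul_zero]

lemma ph_monomial (n : ℕ) (m : Fin 2 →₀ ℕ) (c : ℂ) :
    ph n (MvPowerSeries.monomial m c) = if wtt m = n then (-1:ℂ)^(m 1) * c else 0 := by
  rw [ph_apply]
  by_cases hw : wtt m = n
  · rw [if_pos hw]
    have hmem : (m 0, m 1) ∈ lineF n := by
      rw [mem_lineF]; simpa [wtt] using hw
    rw [Finset.sum_eq_single_of_mem _ hmem]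
    · rw [show pmm (m 0, m 1).1 (m 0, m 1).2 = m from fin2_eta m, coeff_monomial_same]
    · intro q hq hne
      rw [coeff_monomial_ne, mul_zero]
      intro he
      apply hne
      have h0 := congrArg (fun f => f 0) he
      have h1 := congrArg (fun f => f 1) he
      simp only [pmm_apply0, pmm_apply1] at h0 h1
      exact Prod.ext h0 h1
  · rw [if_neg hw]
    refine Finset.sum_eq_zero fun p hp => ?_
    rw [coeff_monomial_ne, mul_zero]
    intro he
    apply hw
    rw [← he, wtt_pmm]
    exact mem_lineF.mp hp

lemma Gr_monomial (k : ℕ) (m : Fin 2 →₀ ℕ) (c : ℂ) :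
    Gr k (MvPowerSeries.monomial m c) =
      if wtt m = k then MvPowerSeries.monomial m c else 0 := by
  apply MvPowerSeries.ext; intro n
  rw [coeff_Gr]
  have hr : (MvPowerSeries.coeff n) (if wtt m = k then MvPowerSeries.monomial m c else 0) =
      if wtt m = k then MvPowerSeries.coeff n (MvPowerSeries.monomial m c) else 0 := by
    split <;> simp
  rw [hr]
  by_cases hn : n = m
  · subst hn; rfl
  · rw [coeff_monomial_ne hn]
    split <;> simp [coeff_monomial_ne hn]

lemma Gr_mul (k : ℕ) (g h : WSR) :
    Gr k (g * h) = ∑ p ∈ Finset.HasAntidiagonal.antidiagonal k, Gr p.1 g * Gr p.2 h := by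
  apply MvPowerSeries.ext; intro m
  rw [coeff_Gr, map_sum]
  have hrhs : ∀ p ∈ Finset.HasAntidiagonal.antidiagonal k,
      MvPowerSeries.coeff m (Gr p.1 g * Gr p.2 h) =
      ∑ q ∈ Finset.HasAntidiagonal.antidiagonal m,
        (if (wtt q.1, wtt q.2) = p then MvPowerSeries.coeff q.1 g * MvPowerSeries.coeff q.2 h else 0) := by
    intro p _
    rw [coeff_mul]
    refine Finset.sum_congr rfl fun q _ => ?_
    rw [coeff_Gr, coeff_Gr]
    by_cases h1 : wtt q.1 = p.1 <;> by_cases h2 : wtt q.2 = p.2 <;>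
      simp [h1, h2, Prod.ext_iff]
  rw [Finset.sum_congr rfl hrhs, Finset.sum_comm]
  by_cases hw : wtt m = k
  · rw [if_pos hw, coeff_mul]
    refine Finset.sum_congr rfl fun q hq => ?_
    rw [Finset.sum_ite_eq (Finset.HasAntidiagonal.antidiagonal k) (wtt q.1, wtt q.2)]
    rw [if_pos]
    rw [Finset.HasAntidiagonal.mem_antidiagonal]
    rw [← wtt_add, (Finset.HasAntidiagonal.mem_antidiagonal.mp hq)]
    exact hw
  · rw [if_neg hw]
    refine (Finset.sum_eq_zero fun q hq => ?_).symm
    rw [Finset.sum_ite_eq (Finset.HasAntidiagonal.antidiagonal k) (wtt q.1, wtt q.2)]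
    rw [if_neg]
    rw [Finset.HasAntidiagonal.mem_antidiagonal]
    rw [← wtt_add, (Finset.HasAntidiagonal.mem_antidiagonal.mp hq)]
    exact hw

end WSsec2

noncomputable section WSsec3
open Finset

/-- `g` has weighted order at least `n` -/
def OGe (g : WSR) (n : ℕ) : Prop := ∀ m, wtt m < n → MvPowerSeries.coeff m g = 0

lemma OGe_mono {g : WSR} {a b : ℕ} (h : OGe g a) (hba : b ≤ a) : OGe g b :=
  fun m hm => h m (lt_of_lt_of_le hm hba)

lemma OGe_add {g h : WSR} {a : ℕ} (hg : OGe g a) (hh : OGe h a) : OGe (g + h) a := by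
  intro m hm
  rw [map_add, hg m hm, hh m hm, add_zero]

lemma OGe_neg {g : WSR} {a : ℕ} (hg : OGe g a) : OGe (-g) a := by
  intro m hm
  rw [map_neg, hg m hm, neg_zero]

lemma OGe_mul {g h : WSR} {a b : ℕ} (hg : OGe g a) (hh : OGe h b) : OGe (g * h) (a + b) := by
  intro m hm
  rw [coeff_mul]
  refine Finset.sum_eq_zero fun q hq => ?_
  have hsum : wtt q.1 + wtt q.2 = wtt m := by
    rw [← wtt_add, Finset.HasAntidiagonal.mem_antidiagonal.mp hq]
  by_cases h1 : wtt q.1 < a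
  · rw [hg _ h1, zero_mul]
  · rw [hh _ (by omega), mul_zero]

lemma Gr_eq_zero_of_OGe {g : WSR} {n : ℕ} (h : OGe g n) {k : ℕ} (hk : k < n) : Gr k g = 0 := by
  apply MvPowerSeries.ext; intro m
  rw [coeff_Gr, map_zero]
  split
  · exact h m (by omega)
  · rfl

lemma ph_eq_zero_of_OGe {g : WSR} {n : ℕ} (h : OGe g (n+1)) : ph n g = 0 :=
  ph_eq_zero_of n g fun m hm => h m (by omega)

/-- the projection killing all monomials containing `x` -/
def pi0 (g : WSR) : WSR := fun m => if m 0 = 0 then MvPowerSeries.coeff m g else 0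

lemma coeff_pi0 (g : WSR) (m : Fin 2 →₀ ℕ) :
    MvPowerSeries.coeff m (pi0 g) = if m 0 = 0 then MvPowerSeries.coeff m g else 0 := rfl

lemma pi0_add (g h : WSR) : pi0 (g + h) = pi0 g + pi0 h := by
  apply MvPowerSeries.ext; intro m
  rw [map_add, coeff_pi0, coeff_pi0, coeff_pi0, map_add]
  split <;> simp

lemma pi0_mul (g h : WSR) : pi0 (g * h) = pi0 g * pi0 h := by
  apply MvPowerSeries.ext; intro m
  rw [coeff_pi0, coeff_mul, coeff_mul]
  by_cases hm : m 0 = 0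
  · rw [if_pos hm]
    refine Finset.sum_congr rfl fun q hq => ?_
    have hq0 : q.1 0 + q.2 0 = 0 := by
      have := Finset.HasAntidiagonal.mem_antidiagonal.mp hq
      calc q.1 0 + q.2 0 = (q.1 + q.2) 0 := by rw [Finsupp.add_apply]
        _ = 0 := by rw [this, hm]
    rw [coeff_pi0, coeff_pi0, if_pos (by omega), if_pos (by omega)]
  · rw [if_neg hm]
    refine (Finset.sum_eq_zero fun q hq => ?_).symm
    have hq0 : q.1 0 + q.2 0 = m 0 := by
      have := Finset.HasAntidiagonal.mem_antidiagonal.mp hq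
      calc q.1 0 + q.2 0 = (q.1 + q.2) 0 := by rw [Finsupp.add_apply]
        _ = m 0 := by rw [this]
    rw [coeff_pi0, coeff_pi0]
    by_cases h1 : q.1 0 = 0
    · rw [if_pos h1, if_neg (by omega), mul_zero]
    · rw [if_neg h1, zero_mul]

lemma pi0_X0_mul (g : WSR) : pi0 (X 0 * g) = 0 := by
  apply MvPowerSeries.ext; intro m
  have h0 : MvPowerSeries.coeff m (0 : WSR) = 0 := map_zero _
  rw [h0, coeff_pi0]
  by_cases hm : m 0 = 0
  · rw [if_pos hm, mul_comm, X_def, coeff_mul_monomial, if_neg]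
    intro hle
    have h1 := (Finsupp.le_def.mp hle) 0
    rw [Finsupp.single_apply] at h1
    simp at h1
    omega
  · rw [if_neg hm]

lemma pi0_one : pi0 (1 : WSR) = 1 := by
  apply MvPowerSeries.ext; intro m
  rw [coeff_pi0]
  by_cases hm : m = 0
  · subst hm
    rw [if_pos (by simp)]
  · have h1 : MvPowerSeries.coeff m (1 : WSR) = 0 := by
      rw [MvPowerSeries.coeff_one, if_neg hm]
    rw [h1]
    split <;> rfl

/-- division by the monomial `x^(s 0) y^(s 1)` -/
def quoOf (s : Fin 2 →₀ ℕ) (g : WSR) : WSR := fun m => MvPowerSeries.coeff (m + s) g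

lemma coeff_quoOf (s : Fin 2 →₀ ℕ) (g : WSR) (m : Fin 2 →₀ ℕ) :
    MvPowerSeries.coeff m (quoOf s g) = MvPowerSeries.coeff (m + s) g := rfl

lemma quoOf_mul_monomial (s : Fin 2 →₀ ℕ) (g : WSR)
    (h : ∀ m, ¬ s ≤ m → MvPowerSeries.coeff m g = 0) :
    quoOf s g * MvPowerSeries.monomial s 1 = g := by
  apply MvPowerSeries.ext; intro m
  rw [coeff_mul_monomial]
  by_cases hle : s ≤ m
  · rw [if_pos hle, coeff_quoOf, mul_one, tsub_add_cancel_of_le hle]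
  · rw [if_neg hle, h m hle]

end WSsec3

noncomputable section WSsec4
open Finset

lemma pmm_le_iff {a b c d : ℕ} : pmm a b ≤ pmm c d ↔ (a ≤ c ∧ b ≤ d) := by
  rw [Finsupp.le_def]
  constructor
  · intro h
    constructor
    · have := h 0; simpa [pmm_apply0] using this
    · have := h 1; simpa [pmm_apply1] using this
  · rintro ⟨h1, h2⟩ i
    fin_cases i
    · simpa [pmm_apply0] using h1
    · simpa [pmm_apply1] using h2

lemma pmm_sub (a b c d : ℕ) : pmm c d - pmm a b = pmm (c-a) (d-b) := by
  ext i
  fin_cases i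
  · rw [Finsupp.tsub_apply]
    simpa [pmm_apply0] using rfl
  · rw [Finsupp.tsub_apply]
    simpa [pmm_apply1] using rfl

lemma pmm_a0 (a : ℕ) : pmm a 0 = Finsupp.single 0 a := by
  ext i
  fin_cases i <;> simp [pmm, Finsupp.single_apply]

lemma pmm_0b (b : ℕ) : pmm 0 b = Finsupp.single 1 b := by
  ext i
  fin_cases i <;> simp [pmm, Finsupp.single_apply]

lemma ph_mono_mul (n a b : ℕ) (w : WSR) :
    ph n (MvPowerSeries.monomial (pmm a b) 1 * w) =
      if 3*a+2*b ≤ n then (-1:ℂ)^b * ph (n - (3*a+2*b)) w else 0 := by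
  rw [ph_apply]
  have hterm : ∀ p : ℕ × ℕ,
      (-1:ℂ)^p.2 * MvPowerSeries.coeff (pmm p.1 p.2) (MvPowerSeries.monomial (pmm a b) 1 * w)
      = if a ≤ p.1 ∧ b ≤ p.2 then (-1:ℂ)^p.2 * MvPowerSeries.coeff (pmm (p.1-a) (p.2-b)) w
        else 0 := by
    intro p
    have hcm : MvPowerSeries.coeff (pmm p.1 p.2) (MvPowerSeries.monomial (pmm a b) 1 * w)
        = if pmm a b ≤ pmm p.1 p.2 then MvPowerSeries.coeff (pmm p.1 p.2 - pmm a b) w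
          else 0 := by
      rw [mul_comm, coeff_mul_monomial]
      split <;> simp
    rw [hcm]
    by_cases hc : a ≤ p.1 ∧ b ≤ p.2
    · rw [if_pos (pmm_le_iff.mpr hc), if_pos hc, pmm_sub]
    · rw [if_neg (fun h => hc (pmm_le_iff.mp h)), if_neg hc, mul_zero]
  rw [Finset.sum_congr rfl (fun p _ => hterm p)]
  by_cases hn : 3*a+2*b ≤ n
  · rw [if_pos hn, ph_apply, Finset.mul_sum, ← Finset.sum_filter]
    refine Finset.sum_nbij' (fun p => (p.1 - a, p.2 - b)) (fun q => (q.1 + a, q.2 + b))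
      ?_ ?_ ?_ ?_ ?_
    · intro p hp
      have h1 := mem_lineF.mp (Finset.mem_filter.mp hp).1
      have h2 := (Finset.mem_filter.mp hp).2
      rw [mem_lineF]
      dsimp only
      omega
    · intro q hq
      have h1 := mem_lineF.mp hq
      refine Finset.mem_filter.mpr ⟨?_, by dsimp only; omega⟩
      rw [mem_lineF]
      dsimp only
      omega
    · intro p hp
      have h2 := (Finset.mem_filter.mp hp).2
      dsimp only
      ext <;> simp <;> omega
    · intro q hq
      dsimp only
      ext <;> simp
    · intro p hp
      have h2 := (Finset.mem_filter.mp hp).2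
      have hb : b ≤ p.2 := h2.2
      have : (-1:ℂ)^p.2 = (-1:ℂ)^b * (-1:ℂ)^(p.2 - b) := by
        rw [← pow_add]
        congr 1
        omega
      rw [this]
      ring
  · rw [if_neg hn]
    refine Finset.sum_eq_zero fun p hp => ?_
    have h1 := mem_lineF.mp hp
    rw [if_neg]
    omega

lemma ph_X0sq_mul (n : ℕ) (w : WSR) :
    ph n ((X 0 ^ 2 : WSR) * w) = if 6 ≤ n then ph (n - 6) w else 0 := by
  have h : (X 0 ^ 2 : WSR) = MvPowerSeries.monomial (pmm 2 0) 1 := by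
    rw [X_pow_eq, pmm_a0]
  rw [h, ph_mono_mul]
  norm_num

lemma ph_X1cube_mul (n : ℕ) (w : WSR) :
    ph n ((X 1 ^ 3 : WSR) * w) = if 6 ≤ n then -ph (n - 6) w else 0 := by
  have h : (X 1 ^ 3 : WSR) = MvPowerSeries.monomial (pmm 0 3) 1 := by
    rw [X_pow_eq, pmm_0b]
  rw [h, ph_mono_mul]
  norm_num

/-- the central vanishing: `ph` kills multiples of `x² + y³` -/
lemma ph_c23_mul (n : ℕ) (w : WSR) : ph n ((X 0 ^ 2 + X 1 ^ 3 : WSR) * w) = 0 := by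
  rw [add_mul, map_add, ph_X0sq_mul, ph_X1cube_mul]
  split <;> ring

lemma ph_X0_mul (n : ℕ) (w : WSR) :
    ph n ((X 0 : WSR) * w) = if 3 ≤ n then ph (n - 3) w else 0 := by
  have h : (X 0 : WSR) = MvPowerSeries.monomial (pmm 1 0) 1 := by
    rw [X_def, pmm_a0]
  rw [h, ph_mono_mul]
  norm_num

lemma ph_X1sq_mul (n : ℕ) (w : WSR) :
    ph n ((X 1 ^ 2 : WSR) * w) = if 4 ≤ n then ph (n - 4) w else 0 := by
  have h : (X 1 ^ 2 : WSR) = MvPowerSeries.monomial (pmm 0 2) 1 := by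
    rw [X_pow_eq, pmm_0b]
  rw [h, ph_mono_mul]
  norm_num

end WSsec4

noncomputable section WSsec5
open Finset

lemma Gr_mul_eq_single {g w : WSR} {k q0 : ℕ} (hq : q0 ≤ k)
    (h : ∀ p q : ℕ, p + q = k → q ≠ q0 → Gr p g * Gr q w = 0) :
    Gr k (g * w) = Gr (k - q0) g * Gr q0 w := by
  rw [Gr_mul]
  refine Finset.sum_eq_single_of_mem (k - q0, q0) ?_ ?_
  · rw [Finset.HasAntidiagonal.mem_antidiagonal]; omega
  · intro p hp hne
    refine h p.1 p.2 (Finset.HasAntidiagonal.mem_antidiagonal.mp hp) fun hq2 => hne ?_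
    have hm := Finset.HasAntidiagonal.mem_antidiagonal.mp hp
    exact Prod.ext (by omega) hq2

lemma Gr_mul_eq_zero {g w : WSR} {k : ℕ}
    (h : ∀ p q : ℕ, p + q = k → Gr p g * Gr q w = 0) :
    Gr k (g * w) = 0 := by
  rw [Gr_mul]
  exact Finset.sum_eq_zero fun p hp => h p.1 p.2 (Finset.HasAntidiagonal.mem_antidiagonal.mp hp)

lemma Gr_zero_eq (g : WSR) : Gr 0 g = (MvPowerSeries.coeff 0 g) • 1 := by
  apply MvPowerSeries.ext; intro m
  rw [coeff_Gr, MvPowerSeries.coeff_smul]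
  by_cases hm : m = 0
  · subst hm
    rw [if_pos (by simp [wtt]), MvPowerSeries.coeff_one, if_pos rfl, mul_one]
  · rw [MvPowerSeries.coeff_one, if_neg hm, mul_zero, if_neg]
    intro hw
    exact hm (wtt_eq_zero hw)

lemma Gr_one_wt (g : WSR) : Gr 1 g = 0 := by
  apply MvPowerSeries.ext; intro m
  rw [coeff_Gr, map_zero, if_neg (wtt_ne_one m)]

lemma ph_Gr_same (n : ℕ) (g : WSR) : ph n (Gr n g) = ph n g := by
  rw [ph_apply, ph_apply]
  refine Finset.sum_congr rfl fun p hp => ?_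
  rw [coeff_Gr, if_pos (by rw [wtt_pmm]; exact mem_lineF.mp hp)]

lemma wtt_sub {m n : Fin 2 →₀ ℕ} (h : n ≤ m) : wtt (m - n) = wtt m - wtt n := by
  have : wtt (m - n) + wtt n = wtt m := by
    rw [← wtt_add, tsub_add_cancel_of_le h]
  omega

lemma wtt_mono {m n : Fin 2 →₀ ℕ} (h : n ≤ m) : wtt n ≤ wtt m := by
  have h0 := Finsupp.le_def.mp h 0
  have h1 := Finsupp.le_def.mp h 1
  simp only [wtt]
  omega

lemma Gr_mono_mul (m : Fin 2 →₀ ℕ) (j : ℕ) (w : WSR) :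
    Gr (wtt m + j) (MvPowerSeries.monomial m 1 * w) =
      MvPowerSeries.monomial m 1 * Gr j w := by
  apply MvPowerSeries.ext; intro n
  rw [coeff_Gr, mul_comm, coeff_mul_monomial,
    mul_comm ((MvPowerSeries.monomial m) 1) ((Gr j) w), coeff_mul_monomial]
  by_cases hle : m ≤ n
  · rw [if_pos hle, if_pos hle, coeff_Gr, mul_one, mul_one]
    have hws : wtt (n - m) = wtt n - wtt m := wtt_sub hle
    have hwm : wtt m ≤ wtt n := wtt_mono hle
    by_cases hw : wtt n = wtt m + j
    · rw [if_pos hw, if_pos (by omega)]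
    · rw [if_neg hw, if_neg (by omega)]
  · rw [if_neg hle, if_neg hle, ite_self]

lemma Gr_mono_mul_low (m : Fin 2 →₀ ℕ) {k : ℕ} (hk : k < wtt m) (w : WSR) :
    Gr k (MvPowerSeries.monomial m 1 * w) = 0 := by
  apply MvPowerSeries.ext; intro n
  rw [coeff_Gr, map_zero]
  by_cases hw : wtt n = k
  · rw [if_pos hw, mul_comm, coeff_mul_monomial, if_neg]
    intro hle
    have := wtt_mono hle
    omega
  · rw [if_neg hw]

/-- `4(x² + y³)`, the weighted6-homogeneous leading part of `V` -/
def Q6 : WSR := MvPowerSeries.monomial (pmm 2 0) 4 + MvPowerSeries.monomial (pmm 0 3) 4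

lemma Q6_eq_smul : Q6 = (4:ℂ) • ((X 0 ^ 2 + X 1 ^ 3 : WSR)) := by
  rw [X_pow_eq, X_pow_eq, ← pmm_a0, ← pmm_0b, smul_add]
  unfold Q6
  rw [← map_smul, ← map_smul]
  norm_num

lemma ph_Q6_mul (n : ℕ) (w : WSR) : ph n (Q6 * w) = 0 := by
  rw [Q6_eq_smul, smul_mul_assoc, map_smul, ph_c23_mul, smul_zero]

lemma Q6_ne_zero : Q6 ≠ 0 := by
  intro h
  have := congrArg (MvPowerSeries.coeff (pmm 2 0)) h
  unfold Q6 at this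
  rw [map_zero, map_add, coeff_monomial_same, coeff_monomial_ne, add_zero] at this
  · norm_num at this
  · intro he
    have := (pmm_inj he).1
    omega

lemma X0_ne_zero : (X 0 : WSR) ≠ 0 := by
  intro h
  have := congrArg (MvPowerSeries.coeff (Finsupp.single 0 1)) h
  rw [map_zero, X_def, coeff_monomial_same] at this
  exact one_ne_zero this

lemma X1pow_ne_zero (n : ℕ) : (X 1 ^ n : WSR) ≠ 0 := by
  intro h
  have := congrArg (MvPowerSeries.coeff (Finsupp.single 1 n)) h
  rw [map_zero, X_pow_eq, coeff_monomial_same] at this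
  exact one_ne_zero this

lemma X0_mul_cancel {w w' : WSR} (h : X 0 * w = X 0 * w') : w = w' := by
  have := mul_left_cancel₀ X0_ne_zero h
  exact this

end WSsec5

noncomputable section WSsec6
open Finset

def mexp (k : ℕ) : Fin 2 →₀ ℕ := if k % 2 = 0 then pmm 0 (k/2) else pmm 1 ((k-3)/2)

lemma wtt_mexp {k : ℕ} (hk : k ≠ 1) : wtt (mexp k) = k := by
  unfold mexp
  split <;> (rw [wtt_pmm]; omega)

def mon (k : ℕ) : WSR := MvPowerSeries.monomial (mexp k) 1

lemma ph_mon_ne {k : ℕ} (hk : k ≠ 1) : ph k (mon k) ≠ 0 := by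
  unfold mon
  rw [ph_monomial, if_pos (wtt_mexp hk), mul_one]
  exact pow_ne_zero _ (by norm_num)

lemma Gr_mon {j k : ℕ} (hk : k ≠ 1) : Gr j (mon k) = if k = j then mon k else 0 := by
  unfold mon
  rw [Gr_monomial, wtt_mexp hk]

def Kset (d : ℕ) : Finset ℕ := insert 0 (Finset.Icc 2 (9+d))

lemma Kset_mem {d k : ℕ} : k ∈ Kset d ↔ (k = 0 ∨ (2 ≤ k ∧ k ≤ 9+d)) := by
  unfold Kset
  rw [Finset.mem_insert, Finset.mem_Icc]

lemma Kset_card (d : ℕ) : (Kset d).card = 9 + d := by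
  unfold Kset
  rw [Finset.card_insert_of_notMem (by rw [Finset.mem_Icc]; omega), Nat.card_Icc]
  omega

lemma core_indep (d : ℕ) (hd : 1 ≤ d) (V h a b : WSR)
    (hV1 : ∀ k, k < 6 → Gr k V = 0)
    (hV2 : Gr 6 V = Q6)
    (hV3 : ∀ k, 6 < k → k < 6+d → Gr k V = 0)
    (hh1 : ∀ l, l < 10+d → Gr l h = 0)
    (hD : ph (10+d) h ≠ 0)
    (cc : ℕ → ℂ) (c' : ℂ)
    (hz : (∑ k ∈ Kset d, cc k • mon k) + c' • mon (11+d) = a * V + b * h) :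
    (∀ k ∈ Kset d, cc k = 0) ∧ c' = 0 := by
  have hne1 : ∀ k ∈ Kset d, k ≠ 1 := by
    intro k hk
    rw [Kset_mem] at hk
    omega
  have hGrz : ∀ j, Gr j (a*V + b*h) =
      (if j ∈ Kset d then cc j • mon j else 0) +
      (if 11+d = j then c' • mon (11+d) else 0) := by
    intro j
    rw [← hz, map_add, map_sum]
    congr 1
    · calc ∑ k ∈ Kset d, Gr j (cc k • mon k)
          = ∑ k ∈ Kset d, (if k = j then cc k • mon k else 0) := by
            refine Finset.sum_congr rfl fun k hk => ?_
            rw [map_smul, Gr_mon (hne1 k hk)]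
            split <;> simp
        _ = _ := Finset.sum_ite_eq' (Kset d) j _
    · rw [map_smul, Gr_mon (by omega : (11+d) ≠ 1)]
      split <;> simp
  -- the basic extraction step: from a homogeneous identity, kill a coefficient
  have hccstep : ∀ k, k ≠ 1 → ∀ w : WSR, cc k • mon k = w * Q6 → cc k = 0 ∧ w * Q6 = 0 := by
    intro k hk w heq
    have hph := congrArg (ph k) heq
    rw [map_smul, mul_comm w Q6, ph_Q6_mul, smul_eq_mul] at hph
    have hcc : cc k = 0 := by
      rcases mul_eq_zero.mp hph with h0 | h0
      · exact h0
      · exact absurd h0 (ph_mon_ne hk)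
    refine ⟨hcc, ?_⟩
    rw [← heq, hcc, zero_smul]
  -- main strong induction
  have key : ∀ i, i ≤ 3+d → Gr i a = 0 ∧ cc (i+6) = 0 := by
    intro i
    induction i using Nat.strong_induction_on with
    | _ i IH =>
    intro hi
    have hGa : Gr (i+6) (a*V) = Gr i a * Q6 := by
      have hs : ∀ p q : ℕ, p + q = i+6 → q ≠ 6 → Gr p a * Gr q V = 0 := by
        intro p q hpq hq6
        by_cases hq1 : q < 6
        · rw [hV1 q hq1, mul_zero]
        · by_cases hq2 : q < 6+d
          · rw [hV3 q (by omega) hq2, mul_zero]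
          · rw [(IH p (by omega) (by omega)).1, zero_mul]
      rw [Gr_mul_eq_single (by omega) hs, Nat.add_sub_cancel, hV2]
    have hGb : Gr (i+6) (b*h) = 0 :=
      Gr_mul_eq_zero fun p q hpq => by rw [hh1 q (by omega), mul_zero]
    have hmem : (i+6) ∈ Kset d := Kset_mem.mpr (Or.inr ⟨by omega, by omega⟩)
    have heq : cc (i+6) • mon (i+6) = Gr i a * Q6 := by
      have h1 := hGrz (i+6)
      rw [map_add, hGa, hGb, add_zero, if_pos hmem, if_neg (by omega), add_zero] at h1
      exact h1.symm
    obtain ⟨hcc, hzero⟩ := hccstep (i+6) (by omega) _ heq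
    refine ⟨?_, hcc⟩
    rcases mul_eq_zero.mp hzero with h0 | h0
    · exact h0
    · exact absurd h0 Q6_ne_zero
  -- coefficients below weight 6
  have hlow : ∀ k ∈ Kset d, k < 6 → cc k = 0 := by
    intro k hk hk6
    have hGa : Gr k (a*V) = 0 :=
      Gr_mul_eq_zero fun p q hpq => by rw [hV1 q (by omega), mul_zero]
    have hGb : Gr k (b*h) = 0 :=
      Gr_mul_eq_zero fun p q hpq => by rw [hh1 q (by omega), mul_zero]
    have h1 := hGrz k
    rw [map_add, hGa, hGb, add_zero, if_pos hk, if_neg (by omega), add_zero] at h1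
    have hph := congrArg (ph k) h1.symm
    rw [map_smul, map_zero, smul_eq_mul] at hph
    rcases mul_eq_zero.mp hph with h0 | h0
    · exact h0
    · exact absurd h0 (ph_mon_ne (hne1 k hk))
  -- grade 10+d : kill the constant term of b and `Gr (4+d) a`
  have hGa10 : Gr (10+d) (a*V) = Gr (4+d) a * Q6 := by
    have hs : ∀ p q : ℕ, p + q = 10+d → q ≠ 6 → Gr p a * Gr q V = 0 := by
      intro p q hpq hq6
      by_cases hq1 : q < 6
      · rw [hV1 q hq1, mul_zero]
      · by_cases hq2 : q < 6+d
        · rw [hV3 q (by omega) hq2, mul_zero]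
        · rw [(key p (by omega)).1, zero_mul]
    have e1 : 10+d-6 = 4+d := by omega
    rw [Gr_mul_eq_single (by omega) hs, e1, hV2]
  have hGb10 : Gr (10+d) (b*h) = Gr 0 b * Gr (10+d) h := by
    have hs : ∀ p q : ℕ, p + q = 10+d → q ≠ 10+d → Gr p b * Gr q h = 0 := by
      intro p q hpq hq
      rw [hh1 q (by omega), mul_zero]
    have e1 : 10+d-(10+d) = 0 := by omega
    rw [Gr_mul_eq_single (by omega) hs, e1]
  have h10 : Gr (4+d) a * Q6 + Gr 0 b * Gr (10+d) h = 0 := by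
    have h1 := hGrz (10+d)
    rw [map_add, hGa10, hGb10, if_neg (by rw [Kset_mem]; omega), if_neg (by omega),
      add_zero] at h1
    exact h1
  have hb0 : MvPowerSeries.coeff 0 b = 0 := by
    have hph := congrArg (ph (10+d)) h10
    rw [map_add, map_zero, mul_comm (Gr (4+d) a) Q6, ph_Q6_mul, zero_add,
      Gr_zero_eq, smul_mul_assoc, one_mul, map_smul, smul_eq_mul, ph_Gr_same] at hph
    rcases mul_eq_zero.mp hph with h0 | h0
    · exact h0
    · exact absurd h0 hD
  have hGr0b : Gr 0 b = 0 := by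
    rw [Gr_zero_eq, hb0, zero_smul]
  have hGr4da : Gr (4+d) a = 0 := by
    rw [hGr0b, zero_mul, add_zero] at h10
    rcases mul_eq_zero.mp h10 with h0 | h0
    · exact h0
    · exact absurd h0 Q6_ne_zero
  have keyA : ∀ i, i ≤ 4+d → Gr i a = 0 := by
    intro i hi
    by_cases h4 : i = 4+d
    · rw [h4]; exact hGr4da
    · exact (key i (by omega)).1
  -- grade 11+d : kill c'
  have hGa11 : Gr (11+d) (a*V) = Gr (5+d) a * Q6 := by
    have hs : ∀ p q : ℕ, p + q = 11+d → q ≠ 6 → Gr p a * Gr q V = 0 := by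
      intro p q hpq hq6
      by_cases hq1 : q < 6
      · rw [hV1 q hq1, mul_zero]
      · by_cases hq2 : q < 6+d
        · rw [hV3 q (by omega) hq2, mul_zero]
        · rw [keyA p (by omega), zero_mul]
    have e1 : 11+d-6 = 5+d := by omega
    rw [Gr_mul_eq_single (by omega) hs, e1, hV2]
  have hGb11 : Gr (11+d) (b*h) = 0 := by
    refine Gr_mul_eq_zero fun p q hpq => ?_
    by_cases hq1 : q < 10+d
    · rw [hh1 q hq1, mul_zero]
    · by_cases hq2 : q = 10+d
      · have hp1 : p = 1 := by omega
        rw [hp1, Gr_one_wt, zero_mul]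
      · have hp0 : p = 0 := by omega
        rw [hp0, hGr0b, zero_mul]
  have h11 : c' • mon (11+d) = Gr (5+d) a * Q6 := by
    have h1 := hGrz (11+d)
    rw [map_add, hGa11, hGb11, add_zero, if_neg (by rw [Kset_mem]; omega), if_pos rfl,
      zero_add] at h1
    exact h1.symm
  have hc' : c' = 0 := by
    have hph := congrArg (ph (11+d)) h11
    rw [map_smul, mul_comm (Gr (5+d) a) Q6, ph_Q6_mul, smul_eq_mul] at hph
    rcases mul_eq_zero.mp hph with h0 | h0
    · exact h0
    · exact absurd h0 (ph_mon_ne (by omega))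
  refine ⟨?_, hc'⟩
  intro k hk
  by_cases hk6 : k < 6
  · exact hlow k hk hk6
  · have hk9 : k ≤ 9+d := (Kset_mem.mp hk).elim (by omega) And.right
    have := (key (k-6) (by omega)).2
    rwa [show k-6+6 = k by omega] at this

end WSsec6

noncomputable section WSsec7
open Finset


lemma coeff_pd (i : Fin 2) (g : WSR) (m : Fin 2 →₀ ℕ) :
    MvPowerSeries.coeff m (pd i g) =
      ((m i : ℂ) + 1) * MvPowerSeries.coeff (m + Finsupp.single i 1) g := rfl

lemma pd_add (i : Fin 2) (g h : WSR) : pd i (g + h) = pd i g + pd i h := by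
  apply MvPowerSeries.ext; intro m
  rw [map_add, coeff_pd, coeff_pd, coeff_pd, map_add]
  ring

lemma add_single0 (m : Fin 2 →₀ ℕ) : m + Finsupp.single 0 1 = pmm (m 0 + 1) (m 1) := by
  ext i
  fin_cases i <;> simp [pmm, Finsupp.single_apply]

lemma add_single1 (m : Fin 2 →₀ ℕ) : m + Finsupp.single 1 1 = pmm (m 0) (m 1 + 1) := by
  ext i
  fin_cases i <;> simp [pmm, Finsupp.single_apply]

lemma pd0_monomial (a b : ℕ) (c : ℂ) :
    pd 0 (MvPowerSeries.monomial (pmm (a+1) b) c) =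
      MvPowerSeries.monomial (pmm a b) (((a:ℂ)+1) * c) := by
  apply MvPowerSeries.ext; intro m
  rw [coeff_pd, add_single0]
  by_cases hm : m = pmm a b
  · subst hm
    rw [pmm_apply0, pmm_apply1, coeff_monomial_same, coeff_monomial_same]
  · rw [coeff_monomial_ne hm, coeff_monomial_ne, mul_zero]
    intro he
    obtain ⟨h1, h2⟩ := pmm_inj he
    exact hm (by rw [← fin2_eta m, show m 0 = a by omega, h2])

lemma pd0_monomial_y (b : ℕ) (c : ℂ) :
    pd 0 (MvPowerSeries.monomial (pmm 0 b) c) = 0 := by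
  apply MvPowerSeries.ext; intro m
  have h0 : MvPowerSeries.coeff m (0:WSR) = 0 := map_zero _
  rw [h0, coeff_pd, add_single0, coeff_monomial_ne, mul_zero]
  intro he
  obtain ⟨h1, h2⟩ := pmm_inj he
  omega

lemma pd1_monomial (a b : ℕ) (c : ℂ) :
    pd 1 (MvPowerSeries.monomial (pmm a (b+1)) c) =
      MvPowerSeries.monomial (pmm a b) (((b:ℂ)+1) * c) := by
  apply MvPowerSeries.ext; intro m
  rw [coeff_pd, add_single1]
  by_cases hm : m = pmm a b
  · subst hm
    rw [pmm_apply0, pmm_apply1, coeff_monomial_same, coeff_monomial_same]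
  · rw [coeff_monomial_ne hm, coeff_monomial_ne, mul_zero]
    intro he
    obtain ⟨h1, h2⟩ := pmm_inj he
    exact hm (by rw [← fin2_eta m, h1, show m 1 = b by omega])

lemma pd1_monomial_x (a : ℕ) (c : ℂ) :
    pd 1 (MvPowerSeries.monomial (pmm a 0) c) = 0 := by
  apply MvPowerSeries.ext; intro m
  have h0 : MvPowerSeries.coeff m (0:WSR) = 0 := map_zero _
  rw [h0, coeff_pd, add_single1, coeff_monomial_ne, mul_zero]
  intro he
  obtain ⟨h1, h2⟩ := pmm_inj he
  omega

lemma P4_eq : ((X 0 : WSR)^2 + X 1^3)^2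
    = MvPowerSeries.monomial (pmm 4 0) 1 +
      (MvPowerSeries.monomial (pmm 2 3) 1 + MvPowerSeries.monomial (pmm 2 3) 1) +
      MvPowerSeries.monomial (pmm 0 6) 1 := by
  have h1 : ((X 0 : WSR)^2 + X 1^3)^2 = X 0^4 + (X 0^2*X 1^3 + X 0^2*X 1^3) + X 1^6 := by
    ring
  have h2 : (X 0 : WSR)^2 * X 1^3 = MvPowerSeries.monomial (pmm 2 3) 1 := by
    rw [X_pow_eq, X_pow_eq, monomial_mul_monomial, one_mul]
    rfl
  rw [h1, h2, X_pow_eq, X_pow_eq, ← pmm_a0, ← pmm_0b]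

/-- `Px = ∂/∂x (x²+y³)² = 4x³ + 4xy³` -/
def Px : WSR := MvPowerSeries.monomial (pmm 3 0) 4 + MvPowerSeries.monomial (pmm 1 3) 4

/-- `Py = ∂/∂y (x²+y³)² = 6x²y² + 6y⁵` -/
def Py : WSR := MvPowerSeries.monomial (pmm 2 2) 6 + MvPowerSeries.monomial (pmm 0 5) 6

lemma Px_eq : pd 0 (((X 0 : WSR)^2 + X 1^3)^2) = Px := by
  have e40 : pmm 4 0 = pmm (3+1) 0 := by norm_num
  have e23 : pmm 2 3 = pmm (1+1) 3 := by norm_num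
  rw [P4_eq, pd_add, pd_add, e40, pd0_monomial, e23, pd_add, pd0_monomial, pd0_monomial_y,
    ← map_add]
  unfold Px
  norm_num

lemma Py_eq : pd 1 (((X 0 : WSR)^2 + X 1^3)^2) = Py := by
  have e23 : pmm 2 3 = pmm 2 (2+1) := by norm_num
  have e06 : pmm 0 6 = pmm 0 (5+1) := by norm_num
  rw [P4_eq, pd_add, pd_add, pd1_monomial_x, e23, pd_add, pd1_monomial, e06, pd1_monomial,
    ← map_add]
  unfold Py
  norm_num

lemma OGe_monomial (m : Fin 2 →₀ ℕ) (c : ℂ) :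
    OGe (MvPowerSeries.monomial m c) (wtt m) := by
  intro n hn
  exact coeff_monomial_ne (fun he => by subst he; omega) c

lemma Gr_Px (k : ℕ) : Gr k Px = if k = 9 then Px else 0 := by
  unfold Px
  rw [map_add, Gr_monomial, Gr_monomial, wtt_pmm, wtt_pmm]
  norm_num
  by_cases hk : k = 9
  · subst hk; norm_num
  · rw [if_neg (fun h => hk h.symm), if_neg (fun h => hk h.symm), if_neg hk, add_zero]

lemma Gr_Py (k : ℕ) : Gr k Py = if k = 10 then Py else 0 := by
  unfold Py
  rw [map_add, Gr_monomial, Gr_monomial, wtt_pmm, wtt_pmm]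
  norm_num
  by_cases hk : k = 10
  · subst hk; norm_num
  · rw [if_neg (fun h => hk h.symm), if_neg (fun h => hk h.symm), if_neg hk, add_zero]

lemma X0_mul_Q6 : (X 0 : WSR) * Q6 = Px := by
  unfold Q6 Px
  rw [mul_add, X_def, monomial_mul_monomial, monomial_mul_monomial,
    show Finsupp.single (0 : Fin 2) 1 + pmm 2 0 = pmm 3 0 from by rw [← pmm_a0, pmm_add],
    show Finsupp.single (0 : Fin 2) 1 + pmm 0 3 = pmm 1 3 from by rw [← pmm_a0, pmm_add]]
  norm_num

lemma X1sq_mul_Q6 : (X 1 : WSR)^2 * Q6 =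
    MvPowerSeries.monomial (pmm 2 2) 4 + MvPowerSeries.monomial (pmm 0 5) 4 := by
  unfold Q6
  rw [mul_add, X_pow_eq, monomial_mul_monomial, monomial_mul_monomial,
    show Finsupp.single (1 : Fin 2) 2 + pmm 2 0 = pmm 2 2 from by rw [← pmm_0b, pmm_add],
    show Finsupp.single (1 : Fin 2) 2 + pmm 0 3 = pmm 0 5 from by rw [← pmm_0b, pmm_add]]
  norm_num

lemma Py_factor : Py = (3/2 : ℂ) • ((X 1 : WSR)^2 * Q6) := by
  rw [X1sq_mul_Q6, smul_add, ← map_smul, ← map_smul]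
  unfold Py
  norm_num

lemma Gr_X0_mul (k : ℕ) (w : WSR) : Gr (3+k) ((X 0 : WSR) * w) = X 0 * Gr k w := by
  have h := Gr_mono_mul (Finsupp.single 0 1) k w
  rw [show wtt (Finsupp.single (0:Fin 2) 1) = 3 from by rw [← pmm_a0, wtt_pmm], ← X_def] at h
  exact h

lemma Gr_X1sq_mul (k : ℕ) (w : WSR) : Gr (4+k) ((X 1 : WSR)^2 * w) = X 1^2 * Gr k w := by
  have h := Gr_mono_mul (Finsupp.single 1 2) k w
  rw [show wtt (Finsupp.single (1:Fin 2) 2) = 4 from by rw [← pmm_0b, wtt_pmm], ← X_pow_eq] at h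
  exact h

lemma Gr_X1sq_mul_low {k : ℕ} (hk : k < 4) (w : WSR) : Gr k ((X 1 : WSR)^2 * w) = 0 := by
  rw [X_pow_eq]
  exact Gr_mono_mul_low _ (by rw [← pmm_0b, wtt_pmm]; omega) w

end WSsec7

noncomputable section WSsec8
open Finset

lemma OGe_pi0 {g : WSR} {n : ℕ} (h : OGe g n) : OGe (pi0 g) n := by
  intro m hm
  rw [coeff_pi0]
  split
  · exact h m hm
  · rfl

lemma pi0_neg (g : WSR) : pi0 (-g) = -(pi0 g) := by
  apply MvPowerSeries.ext; intro m
  rw [coeff_pi0, map_neg, map_neg, coeff_pi0]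
  split <;> simp

lemma pi0_eq_self {g : WSR} (h : ∀ m, m 0 ≠ 0 → MvPowerSeries.coeff m g = 0) :
    pi0 g = g := by
  apply MvPowerSeries.ext; intro m
  rw [coeff_pi0]
  split
  · rfl
  · rename_i hm
    exact (h m hm).symm

lemma ph_pd0 (n : ℕ) (G : WSR) :
    ph n (pd 0 G) =
      ∑ q ∈ lineF (n+3), (-1:ℂ)^q.2 * (q.1:ℂ) * MvPowerSeries.coeff (pmm q.1 q.2) G := by
  rw [ph_apply]
  have hterm : ∀ p : ℕ × ℕ, (-1:ℂ)^p.2 * MvPowerSeries.coeff (pmm p.1 p.2) (pd 0 G)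
      = (-1:ℂ)^p.2 * ((p.1:ℂ)+1) * MvPowerSeries.coeff (pmm (p.1+1) p.2) G := by
    intro p
    rw [coeff_pd, add_single0]
    simp only [pmm_apply0, pmm_apply1]
    ring
  rw [Finset.sum_congr rfl (fun p _ => hterm p)]
  have hsplit : ∑ q ∈ lineF (n+3), (-1:ℂ)^q.2 * (q.1:ℂ) * MvPowerSeries.coeff (pmm q.1 q.2) G
      = ∑ q ∈ (lineF (n+3)).filter (fun q => 1 ≤ q.1),
          (-1:ℂ)^q.2 * (q.1:ℂ) * MvPowerSeries.coeff (pmm q.1 q.2) G := by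
    rw [Finset.sum_filter]
    refine Finset.sum_congr rfl fun q _ => ?_
    by_cases hq : 1 ≤ q.1
    · rw [if_pos hq]
    · rw [if_neg hq, show q.1 = 0 from by omega]
      norm_num
  rw [hsplit]
  refine Finset.sum_nbij' (fun p => (p.1 + 1, p.2)) (fun q => (q.1 - 1, q.2)) ?_ ?_ ?_ ?_ ?_
  · intro p hp
    have h1 := mem_lineF.mp hp
    refine Finset.mem_filter.mpr ⟨?_, by dsimp only; omega⟩
    rw [mem_lineF]
    dsimp only
    omega
  · intro q hq
    have h1 := mem_lineF.mp (Finset.mem_filter.mp hq).1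
    have h2 := (Finset.mem_filter.mp hq).2
    rw [mem_lineF]
    dsimp only
    omega
  · intro p hp
    dsimp only
    ext <;> simp
  · intro q hq
    have h2 := (Finset.mem_filter.mp hq).2
    dsimp only
    ext <;> simp <;> omega
  · intro p hp
    dsimp only
    push_cast
    ring

lemma ph_pd1 (n : ℕ) (G : WSR) :
    ph n (pd 1 G) =
      ∑ q ∈ lineF (n+2), (-1:ℂ)^q.2 * (-(q.2:ℂ)) * MvPowerSeries.coeff (pmm q.1 q.2) G := by
  rw [ph_apply]
  have hterm : ∀ p : ℕ × ℕ, (-1:ℂ)^p.2 * MvPowerSeries.coeff (pmm p.1 p.2) (pd 1 G)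
      = (-1:ℂ)^p.2 * ((p.2:ℂ)+1) * MvPowerSeries.coeff (pmm p.1 (p.2+1)) G := by
    intro p
    rw [coeff_pd, add_single1]
    simp only [pmm_apply0, pmm_apply1]
    ring
  rw [Finset.sum_congr rfl (fun p _ => hterm p)]
  have hsplit : ∑ q ∈ lineF (n+2), (-1:ℂ)^q.2 * (-(q.2:ℂ)) * MvPowerSeries.coeff (pmm q.1 q.2) G
      = ∑ q ∈ (lineF (n+2)).filter (fun q => 1 ≤ q.2),
          (-1:ℂ)^q.2 * (-(q.2:ℂ)) * MvPowerSeries.coeff (pmm q.1 q.2) G := by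
    rw [Finset.sum_filter]
    refine Finset.sum_congr rfl fun q _ => ?_
    by_cases hq : 1 ≤ q.2
    · rw [if_pos hq]
    · rw [if_neg hq, show q.2 = 0 from by omega]
      norm_num
  rw [hsplit]
  refine Finset.sum_nbij' (fun p => (p.1, p.2 + 1)) (fun q => (q.1, q.2 - 1)) ?_ ?_ ?_ ?_ ?_
  · intro p hp
    have h1 := mem_lineF.mp hp
    refine Finset.mem_filter.mpr ⟨?_, by dsimp only; omega⟩
    rw [mem_lineF]
    dsimp only
    omega
  · intro q hq
    have h1 := mem_lineF.mp (Finset.mem_filter.mp hq).1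
    have h2 := (Finset.mem_filter.mp hq).2
    rw [mem_lineF]
    dsimp only
    omega
  · intro p hp
    dsimp only
    ext <;> simp
  · intro q hq
    have h2 := (Finset.mem_filter.mp hq).2
    dsimp only
    ext <;> simp <;> omega
  · intro p hp
    dsimp only
    have hpow : (-1:ℂ)^(p.2+1) = -(-1:ℂ)^p.2 := by
      rw [pow_succ]
      ring
    rw [hpow]
    push_cast
    ring

lemma gamma_link (d : ℕ) (G : WSR) :
    ph (10+d) (pd 1 G) - (3/2) * ph (9+d) (pd 0 G)
      = -(((12:ℂ)+d)/2) *
          ∑ q ∈ lineF (12+d), (-1:ℂ)^q.2 * MvPowerSeries.coeff (pmm q.1 q.2) G := by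
  have e1 : 9+d+3 = 12+d := by omega
  have e2 : 10+d+2 = 12+d := by omega
  rw [ph_pd0, ph_pd1, e1, e2, Finset.mul_sum, Finset.mul_sum, ← Finset.sum_sub_distrib]
  refine Finset.sum_congr rfl fun q hq => ?_
  have hline := mem_lineF.mp hq
  have hcast : 3*(q.1:ℂ) + 2*(q.2:ℂ) = 12 + (d:ℂ) := by
    have := congrArg (Nat.cast : ℕ → ℂ) hline
    push_cast at this
    linear_combination this
  linear_combination (-((-1:ℂ)^q.2 * MvPowerSeries.coeff (pmm q.1 q.2) G)/2) * hcast

lemma parity_link (d : ℕ) (q : ℕ × ℕ) (hq : q ∈ lineF (12+d)) :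
    ((-1:ℂ))^q.2 = (-1:ℂ)^((12+d-3*(d%2))/2) * (-1:ℂ)^(q.1/2) := by
  have hline := mem_lineF.mp hq
  have hq1 : q.1 = 2*(q.1/2) + d % 2 := by omega
  have hqs : q.2 + 3*(q.1/2) = (12+d-3*(d%2))/2 := by omega
  have h1 : (-1:ℂ)^(q.2 + 3*(q.1/2)) = (-1:ℂ)^((12+d-3*(d%2))/2) := by rw [hqs]
  have h2 : (-1:ℂ)^(q.2 + 3*(q.1/2)) = (-1:ℂ)^q.2 * ((-1:ℂ)^(q.1/2))^3 := by
    rw [pow_add, pow_mul']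
  have h3 : ((-1:ℂ)^(q.1/2))^3 * ((-1:ℂ)^(q.1/2)) = 1 := by
    rw [← pow_succ]
    rw [show ((-1:ℂ)^(q.1/2))^4 = ((-1:ℂ)^4)^(q.1/2) from by rw [← pow_mul, ← pow_mul]; ring_nf]
    norm_num
  calc (-1:ℂ)^q.2 = (-1:ℂ)^q.2 * (((-1:ℂ)^(q.1/2))^3 * ((-1:ℂ)^(q.1/2))) := by rw [h3, mul_one]
    _ = ((-1:ℂ)^(q.2 + 3*(q.1/2))) * (-1:ℂ)^(q.1/2) := by rw [h2]; ring
    _ = (-1:ℂ)^((12+d-3*(d%2))/2) * (-1:ℂ)^(q.1/2) := by rw [h1]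

end WSsec8

noncomputable section WSsec9
open Finset MvPowerSeries

/-- For `f = (x²+y³)² + ∑_{3i+2j ≥ 12+d} w_{ij} x^i y^j` with
`∑_{3i+2j = 12+d} (−1)^{⌊i/2⌋} w_{ij} ≠ 0` and finite Milnor number,
the Milnor number satisfies `μ(f) ≥ 15 + d`. -/
theorem Wsharp_milnor_lower_bound (d : ℕ) (hd : 1 ≤ d)
    (f : MvPowerSeries (Fin 2) ℂ)
    (hform : ∀ m : Fin 2 →₀ ℕ,
      MvPowerSeries.coeff m
        (f - ((X 0 : MvPowerSeries (Fin 2) ℂ) ^ 2 + X 1 ^ 3) ^ 2) ≠ 0 →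
      12 + d ≤ 3 * m 0 + 2 * m 1)
    (hsum : ∑ p ∈ (Finset.range (13 + d) ×ˢ Finset.range (13 + d)).filter
        (fun p => 3 * p.1 + 2 * p.2 = 12 + d),
        (-1 : ℂ) ^ (p.1 / 2) *
          MvPowerSeries.coeff (Finsupp.single 0 p.1 + Finsupp.single 1 p.2) f ≠ 0)
    [FiniteDimensional ℂ (MvPowerSeries (Fin 2) ℂ ⧸ Ideal.span {pd 0 f, pd 1 f})] :
    15 + d ≤ Module.finrank ℂ
      (MvPowerSeries (Fin 2) ℂ ⧸ Ideal.span {pd 0 f, pd 1 f}) := by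
  classical
  set J : Ideal WSR := Ideal.span {pd 0 f, pd 1 f} with hJ
  set G : WSR := f - ((X 0 : WSR) ^ 2 + X 1 ^ 3) ^ 2 with hGdef
  have hf : f = ((X 0 : WSR) ^ 2 + X 1 ^ 3) ^ 2 + G := by rw [hGdef]; ring
  have hGsupp : OGe G (12+d) := by
    intro m hm
    by_contra hne
    have := hform m hne
    unfold wtt at hm
    omega
  set Gx : WSR := pd 0 G with hGxdef
  set Gy : WSR := pd 1 G with hGydef
  have hfx : pd 0 f = Px + Gx := by
    rw [show pd 0 f = pd 0 (((X 0 : WSR) ^ 2 + X 1 ^ 3) ^ 2 + G) from by rw [← hf],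
      pd_add, Px_eq]
  have hfy : pd 1 f = Py + Gy := by
    rw [show pd 1 f = pd 1 (((X 0 : WSR) ^ 2 + X 1 ^ 3) ^ 2 + G) from by rw [← hf],
      pd_add, Py_eq]
  have hGxO : OGe Gx (9+d) := by
    intro m hm
    rw [hGxdef, coeff_pd]
    rw [hGsupp (m + Finsupp.single 0 1) (by rw [wtt_add, show wtt (Finsupp.single (0:Fin 2) 1) = 3 from by rw [← pmm_a0, wtt_pmm]]; omega), mul_zero]
  have hGyO : OGe Gy (10+d) := by
    intro m hm
    rw [hGydef, coeff_pd]
    rw [hGsupp (m + Finsupp.single 1 1) (by rw [wtt_add, show wtt (Finsupp.single (1:Fin 2) 1) = 2 from by rw [← pmm_0b, wtt_pmm]]; omega), mul_zero]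
  have hPyO : OGe Py 10 := by
    have h1 : OGe (MvPowerSeries.monomial (pmm 2 2) (6:ℂ)) 10 := by
      have := OGe_monomial (pmm 2 2) (6:ℂ)
      rwa [wtt_pmm] at this
    have h2 : OGe (MvPowerSeries.monomial (pmm 0 5) (6:ℂ)) 10 := by
      have := OGe_monomial (pmm 0 5) (6:ℂ)
      rwa [wtt_pmm] at this
    exact OGe_add h1 h2
  have hPxO : OGe Px 9 := by
    have h1 : OGe (MvPowerSeries.monomial (pmm 3 0) (4:ℂ)) 9 := by
      have := OGe_monomial (pmm 3 0) (4:ℂ)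
      rwa [wtt_pmm] at this
    have h2 : OGe (MvPowerSeries.monomial (pmm 1 3) (4:ℂ)) 9 := by
      have := OGe_monomial (pmm 1 3) (4:ℂ)
      rwa [wtt_pmm] at this
    exact OGe_add h1 h2
  have hfyO : OGe (pd 1 f) 10 := by
    rw [hfy]
    exact OGe_add hPyO (OGe_mono hGyO (by omega))
  -- the unit U with B = U * X1^5
  set B : WSR := pi0 (pd 1 f) with hBdef
  have hB5 : ∀ m : Fin 2 →₀ ℕ, m 1 < 5 → MvPowerSeries.coeff m B = 0 := by
    intro m hm
    rw [hBdef, coeff_pi0]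
    split
    · rename_i hm0
      exact OGe_pi0 hfyO m (by unfold wtt; omega) |>.symm ▸ (hfyO m (by unfold wtt; omega))
    · rfl
  set U : WSR := quoOf (Finsupp.single 1 5) B with hUdef
  have hBU : U * X 1 ^ 5 = B := by
    have h := quoOf_mul_monomial (Finsupp.single 1 5) B ?_
    · rwa [← X_pow_eq] at h
    · intro m hm
      refine hB5 m ?_
      by_contra hc
      exact hm (Finsupp.single_le_iff.mpr (by omega))
  have hU0 : MvPowerSeries.coeff 0 U = 6 := by
    rw [hUdef, coeff_quoOf, zero_add, hBdef, coeff_pi0,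
      if_pos (by simp [Finsupp.single_apply]), hfy, map_add, ← pmm_0b,
      show Py = MvPowerSeries.monomial (pmm 2 2) 6 + MvPowerSeries.monomial (pmm 0 5) 6 from rfl,
      map_add, coeff_monomial_same, coeff_monomial_ne (by
        intro he
        have := pmm_inj he
        omega), hGyO (pmm 0 5) (by rw [wtt_pmm]; omega)]
    ring
  have hUne : U ≠ 0 := by
    intro h
    rw [h, map_zero] at hU0
    norm_num at hU0
  have hUy : ∀ m : Fin 2 →₀ ℕ, m 0 ≠ 0 → MvPowerSeries.coeff m U = 0 := by
    intro m hm
    rw [hUdef, coeff_quoOf, hBdef, coeff_pi0, if_neg (by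
      rw [Finsupp.add_apply, Finsupp.single_apply]
      simpa using hm)]
  have hUc : MvPowerSeries.constantCoeff U = ((Units.mk0 (6:ℂ) (by norm_num) : ℂˣ) : ℂ) := by
    rw [← MvPowerSeries.coeff_zero_eq_constantCoeff_apply, hU0]
    rfl
  set Ui : WSR := MvPowerSeries.invOfUnit U (Units.mk0 (6:ℂ) (by norm_num)) with hUidef
  have hUUi : U * Ui = 1 := MvPowerSeries.mul_invOfUnit U _ hUc
  have hUiU : Ui * U = 1 := by rw [mul_comm]; exact hUUi
  have hpU : pi0 U = U := pi0_eq_self hUy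
  have hpUi : pi0 Ui = Ui := by
    have h1 : U * pi0 Ui = 1 := by
      calc U * pi0 Ui = pi0 U * pi0 Ui := by rw [hpU]
        _ = pi0 (U * Ui) := (pi0_mul U Ui).symm
        _ = 1 := by rw [hUUi, pi0_one]
    calc pi0 Ui = 1 * pi0 Ui := (one_mul _).symm
      _ = (Ui * U) * pi0 Ui := by rw [hUiU]
      _ = Ui * (U * pi0 Ui) := by ring
      _ = Ui := by rw [h1, mul_one]
  -- the series A and η
  set A : WSR := pi0 (pd 0 f) with hAdef
  have hA : A = pi0 Gx := by
    rw [hAdef, hfx, pi0_add, ← X0_mul_Q6, pi0_X0_mul, zero_add]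
  have hAO : OGe A (9+d) := hA ▸ OGe_pi0 hGxO
  have hAy : ∀ m : Fin 2 →₀ ℕ, m 0 ≠ 0 → MvPowerSeries.coeff m A = 0 := by
    intro m hm
    rw [hAdef, coeff_pi0, if_neg hm]
  have hA5 : ∀ m : Fin 2 →₀ ℕ, m 1 < 5 → MvPowerSeries.coeff m A = 0 := by
    intro m hm
    by_cases hm0 : m 0 = 0
    · exact hAO m (by unfold wtt; omega)
    · exact hAy m hm0
  set A' : WSR := quoOf (Finsupp.single 1 5) A with hA'def
  have hAA' : A' * X 1 ^ 5 = A := by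
    have h := quoOf_mul_monomial (Finsupp.single 1 5) A ?_
    · rwa [← X_pow_eq] at h
    · intro m hm
      refine hA5 m ?_
      by_contra hc
      exact hm (Finsupp.single_le_iff.mpr (by omega))
  have hA'O : OGe A' (d-1) := by
    intro m hm
    rw [hA'def, coeff_quoOf]
    refine hAO _ ?_
    rw [wtt_add, show wtt (Finsupp.single (1:Fin 2) 5) = 10 from by rw [← pmm_0b, wtt_pmm]]
    omega
  have hA'y : ∀ m : Fin 2 →₀ ℕ, m 0 ≠ 0 → MvPowerSeries.coeff m A' = 0 := by
    intro m hm
    rw [hA'def, coeff_quoOf]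
    refine hAy _ ?_
    rw [Finsupp.add_apply, Finsupp.single_apply]
    simpa using hm
  set η : WSR := -(A' * Ui) with hηdef
  have hηO : OGe η (d-1) := by
    rw [hηdef]
    exact OGe_neg (by
      have := OGe_mul hA'O (fun m hm => absurd hm (by omega) : OGe Ui 0)
      rwa [Nat.add_zero] at this)
  have hηp : pi0 η = η := by
    rw [hηdef, pi0_neg, pi0_mul, pi0_eq_self hA'y, hpUi]
  have hηB : η * B = -A := by
    calc η * B = -(A' * Ui) * (U * X 1^5) := by rw [hBU]
      _ = -((A' * (Ui * U)) * X 1^5) := by ring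
      _ = -(A' * X 1^5) := by rw [hUiU, mul_one]
      _ = -A := by rw [hAA']
  -- u and V
  set u : WSR := pd 0 f + η * pd 1 f with hudef
  have hup : pi0 u = 0 := by
    rw [hudef, pi0_add, pi0_mul, hηp, ← hAdef, ← hBdef, hηB]
    ring
  set V : WSR := quoOf (Finsupp.single 0 1) u with hVdef
  have hXV : X 0 * V = u := by
    have h := quoOf_mul_monomial (Finsupp.single 0 1) u ?_
    · rw [← X_def] at h
      rw [mul_comm]
      exact h
    · intro m hm
      have hm0 : m 0 = 0 := by
        by_contra hc
        exact hm (Finsupp.single_le_iff.mpr (by omega))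
      have := congrArg (MvPowerSeries.coeff m) hup
      rwa [coeff_pi0, if_pos hm0, map_zero] at this
  -- weighted order facts for u
  have hηfyO : OGe (η * pd 1 f) (9+d) := by
    have := OGe_mul hηO hfyO
    rwa [show d-1+10 = 9+d from by omega] at this
  have huO : OGe u 9 := by
    rw [hudef, hfx]
    exact OGe_add (OGe_add hPxO (OGe_mono hGxO (by omega))) (OGe_mono hηfyO (by omega))
  have hGru : ∀ k, 9 < k → k < 9+d → Gr k u = 0 := by
    intro k h9 h9d
    rw [hudef, hfx, map_add, map_add, Gr_Px, if_neg (by omega),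
      Gr_eq_zero_of_OGe hGxO (by omega), Gr_eq_zero_of_OGe hηfyO (by omega)]
    ring
  have hGr9u : Gr 9 u = Px := by
    rw [hudef, hfx, map_add, map_add, Gr_Px, if_pos rfl,
      Gr_eq_zero_of_OGe hGxO (by omega), Gr_eq_zero_of_OGe hηfyO (by omega)]
    ring
  -- grade facts for V
  have hV1 : ∀ k, k < 6 → Gr k V = 0 := by
    intro k hk
    have h1 : X 0 * Gr k V = X 0 * 0 := by
      rw [← Gr_X0_mul, hXV, Gr_eq_zero_of_OGe huO (by omega), mul_zero]
    exact X0_mul_cancel h1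
  have hV2 : Gr 6 V = Q6 := by
    have h1 : X 0 * Gr 6 V = X 0 * Q6 := by
      rw [← Gr_X0_mul, hXV, show (3+6 : ℕ) = 9 from rfl, hGr9u, X0_mul_Q6]
    exact X0_mul_cancel h1
  have hV3 : ∀ k, 6 < k → k < 6+d → Gr k V = 0 := by
    intro k h6 h6d
    have h1 : X 0 * Gr k V = X 0 * 0 := by
      rw [← Gr_X0_mul, hXV, hGru (3+k) (by omega) (by omega), mul_zero]
    exact X0_mul_cancel h1
  -- the second generator h
  set h : WSR := pd 1 f - (3/2:ℂ) • (X 1^2 * V) with hhdef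
  have hfysplit : pd 1 f = h + (3/2:ℂ) • (X 1^2 * V) := by rw [hhdef]; ring
  have hh1 : ∀ l, l < 10+d → Gr l h = 0 := by
    intro l hl
    rw [hhdef, map_sub, map_smul]
    by_cases hl4 : l < 4
    · rw [Gr_X1sq_mul_low hl4, hfy, map_add, Gr_Py, if_neg (by omega),
        Gr_eq_zero_of_OGe hGyO (by omega), smul_zero]
      ring
    · by_cases hl10 : l < 10
      · rw [show l = 4 + (l-4) from by omega, Gr_X1sq_mul, hV1 (l-4) (by omega), mul_zero,
          smul_zero, hfy, map_add, Gr_Py, if_neg (by omega),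
          Gr_eq_zero_of_OGe hGyO (by omega)]
        ring
      · by_cases hleq : l = 10
        · subst hleq
          rw [show (10:ℕ) = 4 + 6 from rfl, Gr_X1sq_mul, hV2, hfy, map_add, Gr_Py,
            if_pos rfl, Gr_eq_zero_of_OGe hGyO (by omega), Py_factor]
          ring
        · rw [show l = 4 + (l-4) from by omega, Gr_X1sq_mul, hV3 (l-4) (by omega) (by omega),
            mul_zero, smul_zero, hfy, map_add, Gr_Py, if_neg (by omega),
            Gr_eq_zero_of_OGe hGyO (by omega)]
          ring
  -- ph computations
  have hphPx : ph (9+d) Px = 0 := by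
    rw [← ph_Gr_same, Gr_Px, if_neg (by omega), map_zero]
  have hphPy : ph (10+d) Py = 0 := by
    rw [← ph_Gr_same, Gr_Py, if_neg (by omega), map_zero]
  have hphηPy : ph (9+d) (η * Py) = 0 := by
    rw [Py_factor]
    have hre : η * ((3/2:ℂ) • (X 1^2 * Q6)) = (3/2:ℂ) • (Q6 * (η * X 1^2)) := by
      rw [mul_smul_comm]
      congr 1
      ring
    rw [hre, map_smul, ph_Q6_mul, smul_zero]
  have hphηGy : ph (9+d) (η * Gy) = 0 := by
    refine ph_eq_zero_of_OGe (OGe_mono (OGe_mul hηO hGyO) (by omega))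
  have hphu : ph (9+d) u = ph (9+d) Gx := by
    rw [hudef, hfy, hfx, map_add, map_add, hphPx, mul_add, map_add, hphηPy, hphηGy]
    ring
  have hphV : ph (6+d) V = ph (9+d) Gx := by
    have h1 := ph_X0_mul (9+d) V
    rw [hXV, if_pos (by omega), show 9+d-3 = 6+d from by omega] at h1
    rw [← h1, hphu]
  have hphX1V : ph (10+d) (X 1^2 * V) = ph (6+d) V := by
    have h1 := ph_X1sq_mul (10+d) V
    rwa [if_pos (by omega), show 10+d-4 = 6+d from by omega] at h1
  have hphh : ph (10+d) h = ph (10+d) Gy - (3/2) * ph (9+d) Gx := by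
    rw [hhdef, map_sub, map_smul, hfy, map_add, hphPy, hphX1V, hphV, smul_eq_mul]
    ring
  -- the hsum condition enters
  have hlineEq : lineF (12+d) = (Finset.range (13 + d) ×ˢ Finset.range (13 + d)).filter
      (fun p => 3 * p.1 + 2 * p.2 = 12 + d) := by
    unfold lineF
    rw [show 12+d+1 = 13+d from by omega]
  have hGf : ∀ q ∈ lineF (12+d),
      MvPowerSeries.coeff (pmm q.1 q.2) G = MvPowerSeries.coeff (pmm q.1 q.2) f := by
    intro q hq
    have hw := mem_lineF.mp hq
    have hcz : ∀ (a2 b2 : ℕ) (c : ℂ), 3*a2+2*b2 ≠ 12+d →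
        MvPowerSeries.coeff (pmm q.1 q.2) (MvPowerSeries.monomial (pmm a2 b2) c) = 0 := by
      intro a2 b2 c hne
      refine coeff_monomial_ne ?_ c
      intro he
      have h2 := congrArg wtt he
      rw [wtt_pmm, wtt_pmm] at h2
      omega
    rw [hGdef, map_sub, P4_eq, map_add, map_add, map_add, hcz 4 0 1 (by omega),
      hcz 2 3 1 (by omega), hcz 0 6 1 (by omega)]
    ring
  have hS : ∑ q ∈ lineF (12+d), (-1:ℂ)^q.2 * MvPowerSeries.coeff (pmm q.1 q.2) G
      = (-1:ℂ)^((12+d-3*(d%2))/2) *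
        ∑ p ∈ (Finset.range (13 + d) ×ˢ Finset.range (13 + d)).filter
          (fun p => 3 * p.1 + 2 * p.2 = 12 + d),
          (-1 : ℂ) ^ (p.1 / 2) *
            MvPowerSeries.coeff (Finsupp.single 0 p.1 + Finsupp.single 1 p.2) f := by
    rw [← hlineEq, Finset.mul_sum]
    refine Finset.sum_congr rfl fun q hq => ?_
    rw [hGf q hq, parity_link d q hq,
      show Finsupp.single (0:Fin 2) q.1 + Finsupp.single 1 q.2 = pmm q.1 q.2 from rfl]
    ring
  have hD : ph (10+d) h ≠ 0 := by
    have hDval : ph (10+d) Gy - (3/2) * ph (9+d) Gx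
        = -(((12:ℂ)+d)/2) * ((-1:ℂ)^((12+d-3*(d%2))/2) *
          ∑ p ∈ (Finset.range (13 + d) ×ˢ Finset.range (13 + d)).filter
            (fun p => 3 * p.1 + 2 * p.2 = 12 + d),
            (-1 : ℂ) ^ (p.1 / 2) *
              MvPowerSeries.coeff (Finsupp.single 0 p.1 + Finsupp.single 1 p.2) f) := by
      rw [hGydef, hGxdef, gamma_link, hS]
    rw [hphh, hDval]
    have h12 : ((12:ℂ)+d) ≠ 0 := by
      have : ((12+d : ℕ) : ℂ) ≠ 0 := Nat.cast_ne_zero.mpr (by omega)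
      push_cast at this
      exact this
    refine mul_ne_zero ?_ (mul_ne_zero (pow_ne_zero _ (by norm_num)) hsum)
    intro hc
    rw [neg_eq_zero, div_eq_zero_iff] at hc
    rcases hc with hc | hc
    · exact h12 hc
    · norm_num at hc
  -- ============ final counting ============
  have hfin : Module.Finite ℂ (MvPowerSeries (Fin 2) ℂ ⧸ J) := by assumption
  set mkL : WSR →ₗ[ℂ] (MvPowerSeries (Fin 2) ℂ ⧸ J) := (Ideal.Quotient.mkₐ ℂ J).toLinearMap
    with hmkLdef
  set el : (Fin 5) ⊕ ((↥(Kset d)) ⊕ Unit) → WSR := Sum.elim (fun i => (X 1 : WSR) ^ (i : ℕ))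
      (Sum.elim (fun k => X 0 * mon (k : ℕ)) (fun _ => X 0 * mon (11+d))) with heldef
  have hLI : LinearIndependent ℂ (fun i => mkL (el i)) := by
    rw [Fintype.linearIndependent_iff]
    intro g hg
    set cc : ℕ → ℂ := fun k => if hk : k ∈ Kset d then g (Sum.inr (Sum.inl ⟨k, hk⟩)) else 0
      with hccdef
    set c' : ℂ := g (Sum.inr (Sum.inr ())) with hc'def
    set zx : WSR := (∑ k ∈ Kset d, cc k • mon k) + c' • mon (11+d) with hzxdef
    set zp : WSR := ∑ i : Fin 5, g (Sum.inl i) • (X 1 : WSR) ^ (i:ℕ) with hzpdef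
    have hTOTsum : (∑ i, g i • el i) = X 0 * zx + zp := by
      rw [Fintype.sum_sum_type, Fintype.sum_sum_type]
      have p2 : ∑ k : ↥(Kset d), g (Sum.inr (Sum.inl k)) • el (Sum.inr (Sum.inl k))
          = X 0 * ∑ k ∈ Kset d, cc k • mon k := by
        rw [Finset.mul_sum]
        have e1 : ∀ k : ↥(Kset d), g (Sum.inr (Sum.inl k)) • el (Sum.inr (Sum.inl k))
            = X 0 * (cc (k:ℕ) • mon (k:ℕ)) := by
          intro k
          rw [heldef, hccdef]
          dsimp only [Sum.elim_inr, Sum.elim_inl]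
          rw [dif_pos k.2, Subtype.coe_eta, mul_smul_comm]
        rw [Finset.sum_congr rfl (fun k _ => e1 k)]
        exact Finset.sum_coe_sort (Kset d) (fun k => X 0 * (cc k • mon k))
      have p3 : ∑ x : Unit, g (Sum.inr (Sum.inr x)) • el (Sum.inr (Sum.inr x))
          = X 0 * (c' • mon (11+d)) := by
        rw [Fintype.sum_unique]
        rw [heldef, hc'def]
        dsimp only [Sum.elim_inr]
        rw [mul_smul_comm]
      rw [p2, p3, hzxdef, mul_add]
      rw [heldef]
      dsimp only [Sum.elim_inl]
      rw [← hzpdef]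
      ring
    have hTOT : X 0 * zx + zp ∈ J := by
      rw [← Ideal.Quotient.eq_zero_iff_mem (I := J)]
      have : mkL (X 0 * zx + zp) = 0 := by
        rw [← hTOTsum, map_sum]
        rw [← hg]
        exact Finset.sum_congr rfl fun i _ => by rw [map_smul]
      exact this
    rw [hJ] at hTOT
    obtain ⟨α, β, hαβ⟩ := Ideal.mem_span_pair.mp hTOT
    set β₁ : WSR := β - α * η with hβ₁def
    have hEq : α * u + β₁ * pd 1 f = X 0 * zx + zp := by
      rw [hudef, hβ₁def]
      linear_combination hαβ
    have hzpy : ∀ m : Fin 2 →₀ ℕ, m 0 ≠ 0 → MvPowerSeries.coeff m zp = 0 := by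
      intro m hm
      rw [hzpdef, map_sum]
      refine Finset.sum_eq_zero fun i _ => ?_
      rw [MvPowerSeries.coeff_smul, MvPowerSeries.coeff_X_pow, if_neg, mul_zero]
      intro he
      rw [he, Finsupp.single_apply] at hm
      simp at hm
    have hpi0Eq : pi0 β₁ * B = zp := by
      have h1 := congrArg pi0 hEq
      rw [pi0_add, pi0_mul, pi0_mul, hup, mul_zero, zero_add, pi0_add, pi0_X0_mul,
        zero_add, ← hBdef, pi0_eq_self hzpy] at h1
      exact h1
    have hej : ∀ j : Fin 5, g (Sum.inl j) = 0 := by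
      intro j
      have h1 := congrArg (MvPowerSeries.coeff (pmm 0 (j:ℕ))) hpi0Eq
      rw [← hBU, show pi0 β₁ * (U * X 1^5) = (pi0 β₁ * U) * X 1^5 from by ring,
        X_pow_eq, coeff_mul_monomial, if_neg (by
          intro hle
          have := Finsupp.le_def.mp hle 1
          rw [Finsupp.single_apply, pmm_apply1] at this
          simp at this
          omega)] at h1
      rw [hzpdef, map_sum, Finset.sum_eq_single j (fun i _ hne => by
          rw [MvPowerSeries.coeff_smul, MvPowerSeries.coeff_X_pow, if_neg, mul_zero]
          intro he
          rw [← pmm_0b] at he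
          have := (pmm_inj he.symm).2
          exact hne (by
            apply Fin.ext
            omega))
        (fun hc => absurd (Finset.mem_univ j) hc)] at h1
      rw [MvPowerSeries.coeff_smul, MvPowerSeries.coeff_X_pow, if_pos (pmm_0b (j:ℕ)),
        mul_one] at h1
      exact h1.symm
    have hzp0 : zp = 0 := by
      rw [hzpdef]
      exact Finset.sum_eq_zero fun i _ => by rw [hej i, zero_smul]
    have hEq2 : X 0 * (zx - α * V) = β₁ * pd 1 f := by
      rw [hzp0, add_zero] at hEq
      linear_combination -hEq - α * hXV
    have hpi0β : pi0 β₁ = 0 := by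
      have h1 := congrArg pi0 hEq2
      rw [pi0_X0_mul, pi0_mul, ← hBdef] at h1
      have h2 : (pi0 β₁ * U) * X 1^5 = 0 := by
        rw [← hBU] at h1
        rw [mul_assoc]
        exact h1.symm
      rcases mul_eq_zero.mp h2 with h3 | h3
      · rcases mul_eq_zero.mp h3 with h4 | h4
        · exact h4
        · exact absurd h4 hUne
      · exact absurd h3 (X1pow_ne_zero 5)
    set β₂ : WSR := quoOf (Finsupp.single 0 1) β₁ with hβ₂def
    have hβ₁X : X 0 * β₂ = β₁ := by
      have hq := quoOf_mul_monomial (Finsupp.single 0 1) β₁ ?_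
      · rw [← X_def] at hq
        rw [mul_comm]
        exact hq
      · intro m hm
        have hm0 : m 0 = 0 := by
          by_contra hc
          exact hm (Finsupp.single_le_iff.mpr (by omega))
        have := congrArg (MvPowerSeries.coeff m) hpi0β
        rwa [coeff_pi0, if_pos hm0, map_zero] at this
    have hzx2 : zx - α*V = β₂ * pd 1 f := by
      refine X0_mul_cancel (w := zx - α*V) (w' := β₂ * pd 1 f) ?_
      rw [hEq2, ← hβ₁X]
      ring
    have hzx : zx = (α + (3/2:ℂ) • (β₂ * X 1^2)) * V + β₂ * h := by
      rw [hfysplit] at hzx2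
      rw [MvPowerSeries.smul_eq_C_mul] at hzx2 ⊢
      linear_combination hzx2
    obtain ⟨hccz, hc'z⟩ := core_indep d hd V h (α + (3/2:ℂ) • (β₂ * X 1^2)) β₂
      hV1 hV2 hV3 hh1 hD cc c' (by rw [← hzxdef, hzx])
    intro i
    rcases i with i | k | x
    · exact hej i
    · have h1 := hccz (k:ℕ) k.2
      rw [hccdef] at h1
      dsimp only at h1
      rwa [dif_pos k.2, Subtype.coe_eta] at h1
    · cases x
      exact hc'z
  have hcard : Fintype.card ((Fin 5) ⊕ ((↥(Kset d)) ⊕ Unit)) = 15 + d := by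
    rw [Fintype.card_sum, Fintype.card_sum, Fintype.card_coe, Kset_card,
      Fintype.card_fin]
    simp
    omega
  have hle := hLI.fintype_card_le_finrank
  rw [hcard] at hle
  exact hle

end WSsec9
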